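/- Let N₀ ≥ 2 be an integer and let φ : ℝ → ℝ be of class C^{N₀} with |φ^{(j)}(u)| ≤ C(1+|u|)^{-N₀-2} for all u ∈ ℝ and all 0 ≤ j ≤ N₀. Define H(z) := ∫_ℝ φ(u)/(z − u) du for z ∈ ℂ with Im z < 0. Then H is holomorphic on the open lower half-plane and for every integer 0 ≤ n ≤ N₀ − 2 there is a constant C_n (depending only on C, N₀, n) such that |H^{(n)}(z)| ≤ C_n for all z with Im z < 0; in particular all these derivatives are bounded uniformly up to the real axis. -/

import Mathlib

open MeasureTheory

/-- The Cauchy integral `H(z) = ∫_ℝ φ(u)/(z − u) du`. -/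
noncomputable def Hcauchy (φ : ℝ → ℝ) (z : ℂ) : ℂ :=
  ∫ u : ℝ, (φ u : ℂ) / (z - (u : ℂ))

namespace HcauchyAux

open Filter Metric Set Complex Topology

/-- The weight function. -/
noncomputable def wt (r : ℝ) (u : ℝ) : ℝ := ((1 + |u|) ^ r)⁻¹

lemma wt_pos (r u : ℝ) : 0 < wt r u := by
  unfold wt; positivity

lemma wt_le_one {r : ℝ} (hr : 0 ≤ r) (u : ℝ) : wt r u ≤ 1 := by
  unfold wt
  rw [inv_le_one_iff₀]
  right
  exact Real.one_le_rpow (le_add_of_nonneg_right (abs_nonneg u)) hr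

lemma continuous_wt (r : ℝ) : Continuous (wt r) := by
  unfold wt
  have h : ∀ u : ℝ, (1 + |u|) ^ r ≠ 0 := fun u => by positivity
  exact (Continuous.rpow_const (by continuity) (fun u => Or.inl (by positivity))).inv₀ h

lemma integrable_wt {r : ℝ} (hr : 1 < r) : Integrable (wt r) := by
  have h := integrable_one_add_norm (E := ℝ) (μ := volume) (r := r) (by simpa using hr)
  apply h.congr
  filter_upwards with u
  rw [Real.rpow_neg (by positivity)]
  simp [wt, Real.norm_eq_abs]

lemma wt_integral_nonneg (r : ℝ) : 0 ≤ ∫ u, wt r u :=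
  integral_nonneg fun u => (wt_pos r u).le

lemma tendsto_wt_atTop {r : ℝ} (hr : 0 < r) : Tendsto (wt r) atTop (𝓝 0) := by
  apply Tendsto.inv_tendsto_atTop
  exact (tendsto_rpow_atTop hr).comp
    (tendsto_atTop_add_const_left _ 1 tendsto_abs_atTop_atTop)

lemma tendsto_wt_atBot {r : ℝ} (hr : 0 < r) : Tendsto (wt r) atBot (𝓝 0) := by
  apply Tendsto.inv_tendsto_atTop
  exact (tendsto_rpow_atTop hr).comp
    (tendsto_atTop_add_const_left _ 1 tendsto_abs_atBot_atTop)

section kernel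

variable {r D : ℝ} {ψ : ℝ → ℝ} {z : ℂ}

lemma im_le_abs_sub (z : ℂ) (u : ℝ) : |z.im| ≤ ‖z - u‖ := by
  have := Complex.abs_im_le_norm (z - u)
  simpa using this

lemma re_le_abs_sub (z : ℂ) (u : ℝ) : |z.re - u| ≤ ‖z - u‖ := by
  have := Complex.abs_re_le_norm (z - u)
  simpa using this

lemma sub_ne_zero_of_im (hz : z.im ≠ 0) (u : ℝ) : z - (u : ℂ) ≠ 0 := by
  intro h
  apply hz
  have : (z - (u : ℂ)).im = 0 := by rw [h]; simp
  simpa using this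

lemma bound_nonneg (h0 : ∀ u, |ψ u| ≤ D * wt r u) (u : ℝ) : 0 ≤ D * wt r u :=
  le_trans (abs_nonneg _) (h0 u)

lemma D_nonneg (h0 : ∀ u, |ψ u| ≤ D * wt r u) : 0 ≤ D := by
  have h := bound_nonneg h0 0
  nlinarith [wt_pos r 0]

/-- Integrability of `ψ(u)/(z-u)`. -/
lemma integrable_kernel (hr : 1 < r) (hc : Continuous ψ)
    (h0 : ∀ u, |ψ u| ≤ D * wt r u) (hz : z.im ≠ 0) :
    Integrable (fun u : ℝ => (ψ u : ℂ) / (z - u)) := by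
  have hzi : 0 < |z.im| := abs_pos.mpr hz
  have hmeas : Continuous (fun u : ℝ => (ψ u : ℂ) / (z - u)) := by
    apply Continuous.div
    · exact Complex.continuous_ofReal.comp hc
    · continuity
    · exact fun u => sub_ne_zero_of_im hz u
  refine (((integrable_wt hr).const_mul D).const_mul |z.im|⁻¹).mono'
    hmeas.aestronglyMeasurable ?_
  filter_upwards with u
  have h1 : ‖(ψ u : ℂ) / (z - u)‖ = |ψ u| / ‖z - u‖ := by
    simp [Complex.norm_real]
  rw [h1]
  calc |ψ u| / ‖z - u‖ ≤ (D * wt r u) / |z.im| :=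
        div_le_div₀ (bound_nonneg h0 u) (h0 u) hzi (im_le_abs_sub z u)
    _ = |z.im|⁻¹ * (D * wt r u) := by rw [div_eq_inv_mul]

/-- Integrability of `ψ(u)/(z-u)²`. -/
lemma integrable_kernel2 (hr : 1 < r) (hc : Continuous ψ)
    (h0 : ∀ u, |ψ u| ≤ D * wt r u) (hz : z.im ≠ 0) :
    Integrable (fun u : ℝ => (ψ u : ℂ) * ((z - u) ^ 2)⁻¹) := by
  have hzi : 0 < |z.im| := abs_pos.mpr hz
  have hne : ∀ u : ℝ, (z - (u : ℂ)) ^ 2 ≠ 0 := fun u => pow_ne_zero _ (sub_ne_zero_of_im hz u)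
  have hmeas : Continuous (fun u : ℝ => (ψ u : ℂ) * ((z - u) ^ 2)⁻¹) := by
    apply Continuous.mul
    · exact Complex.continuous_ofReal.comp hc
    · exact Continuous.inv₀ (by continuity) hne
  refine (((integrable_wt hr).const_mul D).const_mul (|z.im| ^ 2)⁻¹).mono'
    hmeas.aestronglyMeasurable ?_
  filter_upwards with u
  have h1 : ‖(ψ u : ℂ) * ((z - u) ^ 2)⁻¹‖ = |ψ u| / ‖z - u‖ ^ 2 := by
    simp [Complex.norm_real, div_eq_mul_inv]
  rw [h1]
  calc |ψ u| / ‖z - u‖ ^ 2 ≤ (D * wt r u) / |z.im| ^ 2 := by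
        apply div_le_div₀ (bound_nonneg h0 u) (h0 u) (by positivity)
        exact pow_le_pow_left₀ (abs_nonneg _) (im_le_abs_sub z u) 2
    _ = (|z.im| ^ 2)⁻¹ * (D * wt r u) := by rw [div_eq_inv_mul]

/-- The boundary-term function for integration by parts. -/
lemma tendsto_bdry_atTop (hr : 0 < r) (h0 : ∀ u, |ψ u| ≤ D * wt r u) (hz : z.im ≠ 0) :
    Tendsto (fun u : ℝ => (ψ u : ℂ) * (z - u)⁻¹) atTop (𝓝 0) := by
  have hzi : 0 < |z.im| := abs_pos.mpr hz
  apply squeeze_zero_norm (a := fun u => |z.im|⁻¹ * (D * wt r u))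
  · intro u
    have h1 : ‖(ψ u : ℂ) * (z - u)⁻¹‖ = |ψ u| / ‖z - u‖ := by
      simp [Complex.norm_real, div_eq_mul_inv]
    rw [h1]
    calc |ψ u| / ‖z - u‖ ≤ (D * wt r u) / |z.im| :=
          div_le_div₀ (bound_nonneg h0 u) (h0 u) hzi (im_le_abs_sub z u)
      _ = |z.im|⁻¹ * (D * wt r u) := by rw [div_eq_inv_mul]
  · have := ((tendsto_wt_atTop hr).const_mul D).const_mul |z.im|⁻¹
    simpa using this

lemma tendsto_bdry_atBot (hr : 0 < r) (h0 : ∀ u, |ψ u| ≤ D * wt r u) (hz : z.im ≠ 0) :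
    Tendsto (fun u : ℝ => (ψ u : ℂ) * (z - u)⁻¹) atBot (𝓝 0) := by
  have hzi : 0 < |z.im| := abs_pos.mpr hz
  apply squeeze_zero_norm (a := fun u => |z.im|⁻¹ * (D * wt r u))
  · intro u
    have h1 : ‖(ψ u : ℂ) * (z - u)⁻¹‖ = |ψ u| / ‖z - u‖ := by
      simp [Complex.norm_real, div_eq_mul_inv]
    rw [h1]
    calc |ψ u| / ‖z - u‖ ≤ (D * wt r u) / |z.im| :=
          div_le_div₀ (bound_nonneg h0 u) (h0 u) hzi (im_le_abs_sub z u)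
      _ = |z.im|⁻¹ * (D * wt r u) := by rw [div_eq_inv_mul]
  · have := ((tendsto_wt_atBot hr).const_mul D).const_mul |z.im|⁻¹
    simpa using this

/-- Derivative in `u` of the product `ψ(u)·(z-u)⁻¹`. -/
lemma hasDerivAt_bdry (hψ : Differentiable ℝ ψ) (hz : z.im ≠ 0) (u : ℝ) :
    HasDerivAt (fun u : ℝ => (ψ u : ℂ) * (z - u)⁻¹)
      (((deriv ψ u : ℝ) : ℂ) * (z - u)⁻¹ + (ψ u : ℂ) * ((z - u) ^ 2)⁻¹) u := by
  have h1 : HasDerivAt (fun u : ℝ => ((ψ u : ℝ) : ℂ)) ((deriv ψ u : ℝ) : ℂ) u :=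
    (hψ u).hasDerivAt.ofReal_comp
  have hid : HasDerivAt (fun u : ℝ => (u : ℂ)) 1 u := by
    simpa using (hasDerivAt_id (u : ℂ)).comp_ofReal
  have h2' : HasDerivAt (fun u : ℝ => z - (u : ℂ)) (-1) u := by
    simpa using hid.const_sub z
  have h2 : HasDerivAt (fun u : ℝ => (z - (u : ℂ))⁻¹) (((z - u) ^ 2)⁻¹) u := by
    have := (hasDerivAt_inv (sub_ne_zero_of_im hz u)).comp u h2'
    exact this.congr_deriv (by ring)
  have := h1.mul h2
  exact this

/-- Integration by parts: `∫ ψ(u)/(z-u)² = -∫ ψ'(u)/(z-u)`. -/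
lemma integral_parts (hr : 1 < r) (hψ : Differentiable ℝ ψ) (hc' : Continuous (deriv ψ))
    (h0 : ∀ u, |ψ u| ≤ D * wt r u) (h1 : ∀ u, |deriv ψ u| ≤ D * wt r u) (hz : z.im ≠ 0) :
    ∫ u : ℝ, (((deriv ψ u : ℝ) : ℂ) * (z - u)⁻¹ + (ψ u : ℂ) * ((z - u) ^ 2)⁻¹) = 0 := by
  have hr0 : (0:ℝ) < r := lt_trans one_pos hr
  set g : ℝ → ℂ := fun u => (ψ u : ℂ) * (z - u)⁻¹ with hg
  have hderiv : ∀ u : ℝ, HasDerivAt g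
      (((deriv ψ u : ℝ) : ℂ) * (z - u)⁻¹ + (ψ u : ℂ) * ((z - u) ^ 2)⁻¹) u :=
    hasDerivAt_bdry hψ hz
  have hint : Integrable (fun u : ℝ =>
      ((deriv ψ u : ℝ) : ℂ) * (z - u)⁻¹ + (ψ u : ℂ) * ((z - u) ^ 2)⁻¹) := by
    apply Integrable.add
    · have := integrable_kernel hr hc' h1 hz
      simpa [div_eq_mul_inv] using this
    · exact integrable_kernel2 hr hψ.continuous h0 hz
  have hIoi : ∫ u in Ioi (0:ℝ),
      (((deriv ψ u : ℝ) : ℂ) * (z - u)⁻¹ + (ψ u : ℂ) * ((z - u) ^ 2)⁻¹) = 0 - g 0 :=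
    integral_Ioi_of_hasDerivAt_of_tendsto' (fun u _ => hderiv u) hint.integrableOn
      (tendsto_bdry_atTop hr0 h0 hz)
  have hIic : ∫ u in Iic (0:ℝ),
      (((deriv ψ u : ℝ) : ℂ) * (z - u)⁻¹ + (ψ u : ℂ) * ((z - u) ^ 2)⁻¹) = g 0 - 0 :=
    integral_Iic_of_hasDerivAt_of_tendsto' (fun u _ => hderiv u) hint.integrableOn
      (tendsto_bdry_atBot hr0 h0 hz)
  rw [← intervalIntegral.integral_Iic_add_Ioi (b := (0:ℝ)) hint.integrableOn hint.integrableOn, hIoi, hIic]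
  ring

/-- Key derivative formula: `(Hcauchy ψ)'(z) = Hcauchy ψ' (z)` for `Im z < 0`. -/
lemma hasDerivAt_Hcauchy (hr : 1 < r) (hψ : Differentiable ℝ ψ) (hc' : Continuous (deriv ψ))
    (h0 : ∀ u, |ψ u| ≤ D * wt r u) (h1 : ∀ u, |deriv ψ u| ≤ D * wt r u) (hz : z.im < 0) :
    HasDerivAt (Hcauchy ψ) (Hcauchy (deriv ψ) z) z := by
  have hzi : z.im ≠ 0 := ne_of_lt hz
  set ε : ℝ := -z.im / 2 with hε
  have hε_pos : 0 < ε := by simp [hε]; linarith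
  -- properties of points in the ball
  have hball : ∀ w ∈ ball z ε, w.im < 0 ∧ ε ≤ |w.im| := by
    intro w hw
    rw [mem_ball] at hw
    have him : |w.im - z.im| ≤ dist w z := by
      have := Complex.abs_im_le_norm (w - z)
      simpa [Complex.dist_eq, Complex.sub_im] using this
    have h2 : |w.im - z.im| < ε := lt_of_le_of_lt him hw
    rw [abs_lt] at h2
    constructor
    · linarith [h2.2]
    · rw [abs_of_neg (by linarith [h2.2])]
      linarith [h2.2]
  have key := hasDerivAt_integral_of_dominated_loc_of_deriv_le
    (F := fun w (u : ℝ) => (ψ u : ℂ) / (w - u))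
    (F' := fun w (u : ℝ) => -((ψ u : ℂ) * ((w - u) ^ 2)⁻¹))
    (μ := volume) (x₀ := z) (bound := fun u => (ε ^ 2)⁻¹ * (D * wt r u)) (ball_mem_nhds z hε_pos)
    ?meas ?int ?meas' ?bnd ?bint ?diff
  case meas =>
    filter_upwards [ball_mem_nhds z hε_pos] with w hw
    exact (integrable_kernel hr hψ.continuous h0 (ne_of_lt (hball w hw).1)).aestronglyMeasurable
  case int => exact integrable_kernel hr hψ.continuous h0 hzi
  case meas' =>
    exact ((integrable_kernel2 hr hψ.continuous h0 hzi).neg).aestronglyMeasurable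
  case bnd =>
    filter_upwards with u w hw
    obtain ⟨hw1, hw2⟩ := hball w hw
    have hwi : w.im ≠ 0 := ne_of_lt hw1
    have habs : ε ≤ ‖w - u‖ := le_trans hw2 (im_le_abs_sub w u)
    have h1n : ‖-((ψ u : ℂ) * ((w - u) ^ 2)⁻¹)‖ = |ψ u| / ‖w - u‖ ^ 2 := by
      simp [Complex.norm_real, div_eq_mul_inv]
    rw [h1n]
    calc |ψ u| / ‖w - u‖ ^ 2 ≤ (D * wt r u) / ε ^ 2 := by
          apply div_le_div₀ (bound_nonneg h0 u) (h0 u) (by positivity)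
          exact pow_le_pow_left₀ hε_pos.le habs 2
      _ = (ε ^ 2)⁻¹ * (D * wt r u) := by rw [div_eq_inv_mul]
  case bint => exact ((integrable_wt hr).const_mul D).const_mul _
  case diff =>
    filter_upwards with u w hw
    obtain ⟨hw1, _⟩ := hball w hw
    have hne : w - (u : ℂ) ≠ 0 := sub_ne_zero_of_im (ne_of_lt hw1) u
    have hd : HasDerivAt (fun w : ℂ => w - (u : ℂ)) 1 w := (hasDerivAt_id w).sub_const _
    have := (hd.inv hne).const_mul (ψ u : ℂ)
    have heq : HasDerivAt (fun w : ℂ => (ψ u : ℂ) * (w - u)⁻¹)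
        (-((ψ u : ℂ) * ((w - u) ^ 2)⁻¹)) w := by
      exact this.congr_deriv (by ring)
    simpa only [div_eq_mul_inv] using heq
  -- now rewrite the derivative value
  have hval : (∫ u : ℝ, -((ψ u : ℂ) * ((z - u) ^ 2)⁻¹)) = Hcauchy (deriv ψ) z := by
    have hparts := integral_parts hr hψ hc' h0 h1 hzi
    have hint1 : Integrable (fun u : ℝ => ((deriv ψ u : ℝ) : ℂ) * (z - u)⁻¹) := by
      have := integrable_kernel hr hc' h1 hzi
      simpa [div_eq_mul_inv] using this
    have hint2 := integrable_kernel2 hr hψ.continuous h0 hzi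
    rw [integral_add hint1 hint2] at hparts
    rw [integral_neg]
    unfold Hcauchy
    simp only [div_eq_mul_inv]
    linear_combination -hparts
  rw [← hval]
  exact key.2

/-- Logarithmic antiderivative. -/
lemma hasDerivAt_neg_log (hz : z.im ≠ 0) (t : ℝ) :
    HasDerivAt (fun u : ℝ => -Complex.log (z - u)) ((z - t)⁻¹) t := by
  have hmem : z - (t : ℂ) ∈ Complex.slitPlane := by
    rw [Complex.mem_slitPlane_iff]
    right
    simpa using hz
  have hlog := Complex.hasDerivAt_log hmem
  have hinner : HasDerivAt (fun w : ℂ => z - w) (-1) (t : ℂ) := by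
    simpa using (hasDerivAt_id (t : ℂ)).const_sub z
  have hcomp := (hlog.comp (t : ℂ) hinner).comp_ofReal
  have := hcomp.neg
  exact this.congr_deriv (by ring)

/-- Uniform bound for the Cauchy integral of a function with controlled derivative. -/
lemma norm_Hcauchy_le (hr : 1 < r) (hψ : Differentiable ℝ ψ)
    (h0 : ∀ u, |ψ u| ≤ D * wt r u) (h1 : ∀ u, |deriv ψ u| ≤ D * wt r u) (hz : z.im < 0) :
    ‖Hcauchy ψ z‖ ≤ D * (∫ u, wt r u) + D * 2 + D * (2 * Real.pi) := by
  have hD : 0 ≤ D := D_nonneg h0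
  have hzi : z.im ≠ 0 := ne_of_lt hz
  have habs_pos : ∀ u : ℝ, 0 < ‖z - u‖ := fun u => by
    rw [norm_pos_iff]
    exact sub_ne_zero_of_im hzi u
  set x : ℝ := z.re with hx
  set f : ℝ → ℂ := fun u => (ψ u : ℂ) / (z - u) with hf_def
  have hf : Integrable f := integrable_kernel hr hψ.continuous h0 hzi
  set s : Set ℝ := Ioc (x - 1) (x + 1) with hs_def
  have hs : MeasurableSet s := measurableSet_Ioc
  have hsplit : (∫ u in s, f u) + (∫ u in sᶜ, f u) = ∫ u, f u := integral_add_compl hs hf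
  -- Lipschitz bound for ψ
  have hlip : ∀ u : ℝ, |ψ u - ψ x| ≤ D * |u - x| := by
    intro u
    have := convex_univ.norm_image_sub_le_of_norm_deriv_le (f := ψ)
      (fun t _ => (hψ t))
      (fun t _ => by
        calc ‖deriv ψ t‖ ≤ D * wt r t := h1 t
          _ ≤ D * 1 := mul_le_mul_of_nonneg_left (wt_le_one (by linarith) t) hD
          _ = D := mul_one D)
      (mem_univ x) (mem_univ u)
    simpa [Real.norm_eq_abs] using this
  -- Far bound
  have hfar : ‖∫ u in sᶜ, f u‖ ≤ D * ∫ u, wt r u := by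
    calc ‖∫ u in sᶜ, f u‖ ≤ ∫ u in sᶜ, ‖f u‖ := norm_integral_le_integral_norm _
      _ ≤ ∫ u in sᶜ, D * wt r u := by
          apply setIntegral_mono_on hf.norm.integrableOn
            ((integrable_wt hr).const_mul D).integrableOn hs.compl
          intro u hu
          have h1abs : 1 ≤ ‖z - u‖ := by
            refine le_trans ?_ (re_le_abs_sub z u)
            simp only [hs_def, mem_compl_iff, mem_Ioc, not_and_or, not_lt, not_le] at hu
            rcases hu with h | h
            · rw [_root_.abs_of_nonneg (by linarith : (0:ℝ) ≤ z.re - u)]; linarith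
            · rw [_root_.abs_of_nonpos (by linarith : z.re - u ≤ 0)]; linarith
          have : ‖f u‖ = |ψ u| / ‖z - u‖ := by
            simp [hf_def, Complex.norm_real]
          rw [this]
          calc |ψ u| / ‖z - u‖ ≤ |ψ u| := div_le_self (abs_nonneg _) h1abs
            _ ≤ D * wt r u := h0 u
      _ ≤ ∫ u, D * wt r u := by
          apply setIntegral_le_integral ((integrable_wt hr).const_mul D)
          filter_upwards with u
          exact bound_nonneg h0 u
      _ = D * ∫ u, wt r u := integral_const_mul D _
  -- Near decomposition
  have hcont1 : Continuous (fun u : ℝ => ((ψ u - ψ x : ℝ) : ℂ) / (z - u)) := by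
    apply Continuous.div
    · exact Complex.continuous_ofReal.comp (hψ.continuous.sub continuous_const)
    · continuity
    · exact fun u => sub_ne_zero_of_im hzi u
  have hcont2 : Continuous (fun u : ℝ => (z - (u : ℂ))⁻¹) :=
    Continuous.inv₀ (by continuity) (fun u => sub_ne_zero_of_im hzi u)
  have hnear_eq : (∫ u in s, f u)
      = (∫ u in s, ((ψ u - ψ x : ℝ) : ℂ) / (z - u)) + (ψ x : ℂ) * ∫ u in s, (z - u)⁻¹ := by
    rw [← integral_const_mul, ← integral_add (hcont1.integrableOn_Ioc)
      (Continuous.integrableOn_Ioc (f := fun u : ℝ => (ψ x : ℂ) * (z - (u : ℂ))⁻¹) (continuous_const.mul hcont2))]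
    apply integral_congr_ae
    filter_upwards with u
    have hne : z - (u : ℂ) ≠ 0 := sub_ne_zero_of_im hzi u
    field_simp [hf_def]
    simp only [hf_def, div_mul_cancel₀ _ hne]
    push_cast
    ring
  -- Bound on the difference part
  have hnear1 : ‖∫ u in s, ((ψ u - ψ x : ℝ) : ℂ) / (z - u)‖ ≤ D * 2 := by
    have hvol : volume s < ⊤ := measure_Ioc_lt_top
    have hptwise : ∀ u ∈ s, ‖((ψ u - ψ x : ℝ) : ℂ) / (z - u)‖ ≤ D := by
      intro u _
      have heq : ‖((ψ u - ψ x : ℝ) : ℂ) / (z - u)‖ = |ψ u - ψ x| / ‖z - u‖ := by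
        simp [Complex.norm_real, ← Complex.ofReal_sub, Complex.norm_real]
      rw [heq, div_le_iff₀ (habs_pos u)]
      calc |ψ u - ψ x| ≤ D * |u - x| := hlip u
        _ = D * |x - u| := by rw [abs_sub_comm]
        _ ≤ D * ‖z - u‖ := mul_le_mul_of_nonneg_left (re_le_abs_sub z u) hD
    have hthis := norm_setIntegral_le_of_norm_le_const
      (f := fun u : ℝ => ((ψ u - ψ x : ℝ) : ℂ) / (z - u)) hvol hptwise
    have hvol2 : volume.real s = 2 := by
      rw [measureReal_def, hs_def, Real.volume_Ioc, ENNReal.toReal_ofReal (by linarith)]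
      ring
    rw [hvol2] at hthis
    linarith
  -- Compute the logarithmic integral
  have hJ : ‖∫ u in s, (z - (u : ℂ))⁻¹‖ ≤ 2 * Real.pi := by
    have hab : x - 1 ≤ x + 1 := by linarith
    have hIoc : (∫ u in s, (z - (u : ℂ))⁻¹) = ∫ u in (x - 1)..(x + 1), (z - (u : ℂ))⁻¹ := by
      rw [intervalIntegral.integral_of_le hab]
    have hftc := intervalIntegral.integral_eq_sub_of_hasDerivAt
      (f := fun u : ℝ => -Complex.log (z - u)) (f' := fun u : ℝ => (z - (u : ℂ))⁻¹)
      (a := x - 1) (b := x + 1)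
      (fun t _ => hasDerivAt_neg_log hzi t) (hcont2.intervalIntegrable _ _)
    rw [hIoc, hftc]
    set w₁ : ℂ := z - ((x - 1 : ℝ) : ℂ) with hw₁
    set w₂ : ℂ := z - ((x + 1 : ℝ) : ℂ) with hw₂
    have hval : -Complex.log w₂ - -Complex.log w₁ = Complex.log w₁ - Complex.log w₂ := by ring
    rw [hval]
    have habs_eq : ‖w₁‖ = ‖w₂‖ := by
      rw [hw₁, hw₂, Complex.norm_def, Complex.norm_def, Complex.normSq_apply,
        Complex.normSq_apply]
      simp only [Complex.sub_re, Complex.sub_im, Complex.ofReal_re, Complex.ofReal_im, hx]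
      ring_nf
    calc ‖Complex.log w₁ - Complex.log w₂‖
        ≤ |(Complex.log w₁ - Complex.log w₂).re| + |(Complex.log w₁ - Complex.log w₂).im| :=
          Complex.norm_le_abs_re_add_abs_im _
      _ = |Real.log (‖w₁‖) - Real.log (‖w₂‖)|
          + |w₁.arg - w₂.arg| := by
          rw [Complex.sub_re, Complex.sub_im, Complex.log_re, Complex.log_re,
            Complex.log_im, Complex.log_im]
      _ ≤ 0 + (|w₁.arg| + |w₂.arg|) := by
          apply add_le_add
          · rw [habs_eq]; simp
          · exact abs_sub _ _
      _ ≤ 0 + (Real.pi + Real.pi) := by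
          apply add_le_add le_rfl
          exact add_le_add (Complex.abs_arg_le_pi _) (Complex.abs_arg_le_pi _)
      _ = 2 * Real.pi := by ring
  have hnear2 : ‖(ψ x : ℂ) * ∫ u in s, (z - (u : ℂ))⁻¹‖ ≤ D * (2 * Real.pi) := by
    rw [norm_mul]
    apply mul_le_mul ?_ hJ (norm_nonneg _) hD
    calc ‖((ψ x : ℝ) : ℂ)‖ = |ψ x| := by simp [Complex.norm_real]
      _ ≤ D * wt r x := h0 x
      _ ≤ D * 1 := mul_le_mul_of_nonneg_left (wt_le_one (by linarith) x) hD
      _ = D := mul_one D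
  -- Combine
  have : ‖Hcauchy ψ z‖ = ‖∫ u, f u‖ := rfl
  rw [this, ← hsplit]
  calc ‖(∫ u in s, f u) + ∫ u in sᶜ, f u‖
      ≤ ‖∫ u in s, f u‖ + ‖∫ u in sᶜ, f u‖ := norm_add_le _ _
    _ ≤ (D * 2 + D * (2 * Real.pi)) + D * (∫ u, wt r u) := by
        apply add_le_add ?_ hfar
        rw [hnear_eq]
        exact le_trans (norm_add_le _ _) (add_le_add hnear1 hnear2)
    _ = D * (∫ u, wt r u) + D * 2 + D * (2 * Real.pi) := by ring

end kernel

end HcauchyAux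

theorem stmt1 (N₀ : ℕ) (hN₀ : 2 ≤ N₀) (φ : ℝ → ℝ) (C : ℝ)
    (hreg : ContDiff ℝ N₀ φ)
    (hdecay : ∀ j : ℕ, j ≤ N₀ → ∀ u : ℝ,
      |iteratedDeriv j φ u| ≤ C * (1 + |u|) ^ (-(N₀ : ℝ) - 2)) :
    DifferentiableOn ℂ (Hcauchy φ) {z : ℂ | z.im < 0} ∧
    ∀ n : ℕ, n ≤ N₀ - 2 → ∃ Cn : ℝ, ∀ z : ℂ, z.im < 0 →
      ‖iteratedDeriv n (Hcauchy φ) z‖ ≤ Cn := by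
  classical
  open HcauchyAux in
  set r : ℝ := (N₀ : ℝ) + 2 with hrdef
  have hr : 1 < r := by
    have : (0:ℝ) ≤ (N₀:ℝ) := Nat.cast_nonneg _
    rw [hrdef]; linarith
  have hdec : ∀ j : ℕ, j ≤ N₀ → ∀ u : ℝ, |iteratedDeriv j φ u| ≤ C * HcauchyAux.wt r u := by
    intro j hj u
    have h := hdecay j hj u
    have he : (-(N₀ : ℝ) - 2) = -r := by rw [hrdef]; ring
    rw [he, Real.rpow_neg (by positivity)] at h
    exact h
  have hψdiff : ∀ n : ℕ, n < N₀ → Differentiable ℝ (iteratedDeriv n φ) := by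
    intro n hn
    exact hreg.differentiable_iteratedDeriv n (by exact_mod_cast hn)
  have hψcont : ∀ n : ℕ, n ≤ N₀ → Continuous (iteratedDeriv n φ) := by
    intro n hn
    exact hreg.continuous_iteratedDeriv n (by exact_mod_cast hn)
  have hopen : IsOpen {z : ℂ | z.im < 0} :=
    isOpen_lt Complex.continuous_im continuous_const
  -- derivative formula for each level
  have hHder : ∀ n : ℕ, n + 1 ≤ N₀ → ∀ z : ℂ, z.im < 0 →
      HasDerivAt (Hcauchy (iteratedDeriv n φ)) (Hcauchy (iteratedDeriv (n + 1) φ) z) z := by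
    intro n hn z hz
    have hdψ : deriv (iteratedDeriv n φ) = iteratedDeriv (n + 1) φ := (iteratedDeriv_succ).symm
    have h := HcauchyAux.hasDerivAt_Hcauchy hr (hψdiff n (by omega))
      (by rw [hdψ]; exact hψcont (n + 1) hn)
      (hdec n (by omega)) (by rw [hdψ]; exact hdec (n + 1) hn) hz
    rwa [hdψ] at h
  constructor
  · intro z hz
    have h := hHder 0 (by omega) z hz
    rw [iteratedDeriv_zero] at h
    exact h.differentiableAt.differentiableWithinAt
  · intro n hn
    have hn2 : n + 2 ≤ N₀ := by omega
    -- identification of the iterated derivative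
    have key : ∀ m : ℕ, m + 1 ≤ N₀ → ∀ z : ℂ, z.im < 0 →
        iteratedDeriv m (Hcauchy φ) z = Hcauchy (iteratedDeriv m φ) z := by
      intro m
      induction m with
      | zero => intro _ z _; simp [iteratedDeriv_zero]
      | succ k ih =>
        intro hk z hz
        rw [iteratedDeriv_succ]
        have hev : iteratedDeriv k (Hcauchy φ) =ᶠ[nhds z] Hcauchy (iteratedDeriv k φ) := by
          filter_upwards [hopen.mem_nhds hz] with w hw
          exact ih (by omega) w hw
        rw [hev.deriv_eq]
        exact (hHder k (by omega) z hz).deriv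
    refine ⟨C * (∫ u, HcauchyAux.wt r u) + C * 2 + C * (2 * Real.pi), ?_⟩
    intro z hz
    rw [key n (by omega) z hz]
    have hdψ : deriv (iteratedDeriv n φ) = iteratedDeriv (n + 1) φ := (iteratedDeriv_succ).symm
    exact HcauchyAux.norm_Hcauchy_le hr (hψdiff n (by omega)) (hdec n (by omega))
      (by rw [hdψ]; exact hdec (n + 1) (by omega)) hz
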